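/- Let 0 < k_1 < k_2 < ⋯ < k_r and 0 < ℓ_1 < ℓ_2 < ⋯ < ℓ_s be integers, let n_1, …, n_r and m_1, …, m_s be positive integers with n = n_1 + ⋯ + n_r = m_1 + ⋯ + m_s, and suppose φ: ℝ^n → ℝ^n is a linear isomorphism mapping M_{k_1}^{n_1} × ⋯ × M_{k_r}^{n_r} onto M_{ℓ_1}^{m_1} × ⋯ × M_{ℓ_s}^{m_s}. Then φ maps the subset M_{k_1}^{n_1} × ⋯ × M_{k_{r−1}}^{n_{r−1}} × {0_{ℝ^{n_r}}} (vectors whose last n_r coordinates vanish) onto M_{ℓ_1}^{m_1} × ⋯ × M_{ℓ_{s−1}}^{m_{s−1}} × {0_{ℝ^{m_s}}}. -/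

import Mathlib

/-- `M_d = {x ∈ ℤ : -d ≤ x ≤ d}`, as a subset of `ℝ`. -/
def Mset (d : ℕ) : Set ℝ :=
  {x | ∃ k : ℤ, x = (k : ℝ) ∧ k.natAbs ≤ d}

/-- The product `M_{a 0} × ⋯ × M_{a (n-1)}` as a subset of `ℝ^n`.  A product of blocks
`M_{k_1}^{n_1} × ⋯ × M_{k_r}^{n_r}` with `0 < k_1 < ⋯ < k_r` corresponds to a monotone
positive coordinate-bound function `a : Fin n → ℕ`; then `k_r = a (n-1)` and the last
block consists of the coordinates `i` with `a i = a (n-1)`. -/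
def Mprod {n : ℕ} (a : Fin n → ℕ) : Set (Fin n → ℝ) :=
  {x | ∀ i, x i ∈ Mset (a i)}

lemma zero_mem_Mset (d : ℕ) : (0:ℝ) ∈ Mset d := ⟨0, by simp⟩

lemma forward {n : ℕ} {a b : Fin n → ℕ} {φ : (Fin n → ℝ) ≃ₗ[ℝ] (Fin n → ℝ)}
    (hφ : φ '' Mprod a = Mprod b) {x} (hx : x ∈ Mprod a) : φ x ∈ Mprod b := by
  rw [← hφ]; exact Set.mem_image_of_mem _ hx

lemma symm_image {n : ℕ} {a b : Fin n → ℕ} {φ : (Fin n → ℝ) ≃ₗ[ℝ] (Fin n → ℝ)}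
    (hφ : φ '' Mprod a = Mprod b) : φ.symm '' Mprod b = Mprod a := by
  rw [← hφ, ← Set.image_comp]
  ext x
  simp

/-- The maximal bound of `a` is at most that of `b`. -/
lemma kle {n : ℕ} (hn : 0 < n) (a b : Fin n → ℕ) (hb : Monotone b)
    (hapos : ∀ i, 0 < a i)
    (φ : (Fin n → ℝ) ≃ₗ[ℝ] (Fin n → ℝ)) (hφ : φ '' Mprod a = Mprod b) :
    a ⟨n-1, Nat.sub_lt hn Nat.one_pos⟩ ≤ b ⟨n-1, Nat.sub_lt hn Nat.one_pos⟩ := by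
  set last : Fin n := ⟨n-1, by omega⟩ with hlast
  set K := a last with hK
  set e : Fin n → ℝ := Pi.single last 1 with he
  have heA : e ∈ Mprod a := by
    intro j
    rcases eq_or_ne j last with rfl | hj
    · exact ⟨1, by simp [he], by have := hapos last; omega⟩
    · refine ⟨0, by simp [he, Pi.single_apply, hj], by simp⟩
  have heKA : (K:ℝ) • e ∈ Mprod a := by
    intro j
    rcases eq_or_ne j last with rfl | hj
    · exact ⟨K, by simp [he], by simp [hK]⟩
    · refine ⟨0, by simp [he, Pi.single_apply, hj], by simp⟩
  have hyB : φ e ∈ Mprod b := forward hφ heA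
  have hyKB : (K:ℝ) • φ e ∈ Mprod b := by
    rw [← map_smul]; exact forward hφ heKA
  have hy0 : φ e ≠ 0 := by
    rw [LinearEquiv.map_ne_zero_iff]
    intro h
    have : e last = 0 := by rw [h]; rfl
    simp [he] at this
  obtain ⟨i, hi⟩ := Function.ne_iff.mp hy0
  obtain ⟨k, hk1, hk2⟩ := hyB i
  obtain ⟨m, hm1, hm2⟩ := hyKB i
  have hk0 : k ≠ 0 := by
    intro h
    apply hi
    rw [hk1, h]; simp
  have hm' : m = (K : ℤ) * k := by
    have : ((m:ℝ)) = (K : ℝ) * k := by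
      rw [← hm1, ← hk1]
      simp
    exact_mod_cast this
  have hmabs : K * k.natAbs ≤ b i := by
    rw [hm'] at hm2
    simpa [Int.natAbs_mul] using hm2
  have hbi : b i ≤ b last := by
    apply hb
    rw [Fin.le_def]
    simp [hlast]
    omega
  have : 1 ≤ k.natAbs := by omega
  calc K = K * 1 := by ring
  _ ≤ K * k.natAbs := by exact Nat.mul_le_mul_left K this
  _ ≤ b i := hmabs
  _ ≤ b last := hbi

lemma key {n : ℕ} (hn : 0 < n) (a b : Fin n → ℕ)
    (ha : Monotone a) (hb : Monotone b) (hapos : ∀ i, 0 < a i) (hbpos : ∀ i, 0 < b i)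
    (φ : (Fin n → ℝ) ≃ₗ[ℝ] (Fin n → ℝ)) (hφ : φ '' Mprod a = Mprod b) :
    φ '' {x | ∀ i, if a i = a ⟨n - 1, Nat.sub_lt hn Nat.one_pos⟩ then x i = 0 else x i ∈ Mset (a i)} ⊆
      {x | ∀ i, if b i = b ⟨n - 1, Nat.sub_lt hn Nat.one_pos⟩ then x i = 0 else x i ∈ Mset (b i)} := by
  set last : Fin n := ⟨n-1, by omega⟩ with hlast
  have hle : a last ≤ b last := kle hn a b hb hapos φ hφ
  rintro y ⟨x, hx, rfl⟩
  have hxA : x ∈ Mprod a := by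
    intro j
    have hj := hx j
    split at hj
    · rw [hj]; exact zero_mem_Mset _
    · exact hj
  have hyB : φ x ∈ Mprod b := forward hφ hxA
  intro i
  by_cases hbi : b i = b last
  · rw [if_pos hbi]
    -- main step: adding ±(b last)·e_i stays in Mprod b
    have main : ∀ ε : ℤ, ε.natAbs = 1 → φ x i + (b last : ℝ) * (ε:ℝ) ∈ Mset (b i) := by
      intro ε hε
      set δ : Fin n → ℝ := Pi.single i (ε:ℝ) with hδ
      have hδB : δ ∈ Mprod b := by
        intro j
        rcases eq_or_ne j i with rfl | hj
        · exact ⟨ε, by simp [hδ], by have := hbpos j; omega⟩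
        · exact ⟨0, by simp [hδ, Pi.single_apply, hj], by simp⟩
      have hδKB : (b last : ℝ) • δ ∈ Mprod b := by
        intro j
        rcases eq_or_ne j i with rfl | hj
        · refine ⟨(b last : ℤ) * ε, by push_cast; simp [hδ], ?_⟩
          rw [Int.natAbs_mul]
          simp [hε, hbi]
        · exact ⟨0, by simp [hδ, Pi.single_apply, hj], by simp⟩
      set e : Fin n → ℝ := φ.symm δ with he
      have heA : e ∈ Mprod a := forward (symm_image hφ) hδB
      have heKA : (b last : ℝ) • e ∈ Mprod a := by
        rw [he, ← map_smul]
        exact forward (symm_image hφ) hδKB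
      have hsum : x + (b last : ℝ) • e ∈ Mprod a := by
        intro j
        by_cases haj : a j = a last
        · have hx0 : x j = 0 := by have := hx j; rwa [if_pos haj] at this
          have := heKA j
          simpa [hx0] using this
        · have hxj : x j ∈ Mset (a j) := by have := hx j; rwa [if_neg haj] at this
          obtain ⟨k, hk1, hk2⟩ := heA j
          obtain ⟨m, hm1, hm2⟩ := heKA j
          have hm' : m = (b last : ℤ) * k := by
            have : ((m:ℝ)) = (b last : ℝ) * k := by
              rw [← hm1, ← hk1]; simp
            exact_mod_cast this
          have hk0 : k = 0 := by
            by_contra h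
            have hja : a j ≤ a last := by
              apply ha
              rw [Fin.le_def]
              simp [hlast]
              omega
            have hmabs : b last * k.natAbs ≤ a j := by
              rw [hm'] at hm2
              simpa [Int.natAbs_mul] using hm2
            have h1 : 1 ≤ k.natAbs := by omega
            have : b last ≤ a j := le_trans (by nlinarith) hmabs
            omega
          have : (x + (b last : ℝ) • e) j = x j := by
            simp [hk1, hk0]
          rw [this]
          exact hxj
      have himg : φ x + (b last : ℝ) • δ ∈ Mprod b := by
        have h2 := forward hφ hsum
        rwa [map_add, map_smul, he, LinearEquiv.apply_symm_apply] at h2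
      have := himg i
      simpa [hδ] using this
    obtain ⟨k, hk1, hk2⟩ := hyB i
    obtain ⟨m1, hm11, hm12⟩ := main 1 (by simp)
    obtain ⟨m2, hm21, hm22⟩ := main (-1) (by simp)
    have e1 : m1 = k + (b last : ℤ) := by
      have : ((m1:ℝ)) = (k:ℝ) + (b last : ℝ) := by rw [← hm11, hk1]; push_cast; ring
      exact_mod_cast this
    have e2 : m2 = k - (b last : ℤ) := by
      have : ((m2:ℝ)) = (k:ℝ) - (b last : ℝ) := by rw [← hm21, hk1]; push_cast; ring
      exact_mod_cast this
    have hbl : (0:ℕ) < b last := hbpos last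
    have : k = 0 := by omega
    rw [hk1, this]; simp
  · rw [if_neg hbi]
    exact hyB i

/-- If a linear isomorphism of `ℝ^n` maps `M_{k_1}^{n_1} × ⋯ × M_{k_r}^{n_r}` onto
`M_{ℓ_1}^{m_1} × ⋯ × M_{ℓ_s}^{m_s}` (both encoded by monotone positive coordinate-bound
functions `a`, `b`), then `φ` maps `M_{k_1}^{n_1} × ⋯ × M_{k_{r-1}}^{n_{r-1}} × {0}`
onto `M_{ℓ_1}^{m_1} × ⋯ × M_{ℓ_{s-1}}^{m_{s-1}} × {0}`. -/
theorem stmt10 (n : ℕ) (hn : 0 < n) (a b : Fin n → ℕ)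
    (ha : Monotone a) (hb : Monotone b) (hapos : ∀ i, 0 < a i) (hbpos : ∀ i, 0 < b i)
    (φ : (Fin n → ℝ) ≃ₗ[ℝ] (Fin n → ℝ))
    (hφ : φ '' Mprod a = Mprod b) :
    φ '' {x | ∀ i, if a i = a ⟨n - 1, by omega⟩ then x i = 0 else x i ∈ Mset (a i)} =
      {x | ∀ i, if b i = b ⟨n - 1, by omega⟩ then x i = 0 else x i ∈ Mset (b i)} := by
  apply Set.Subset.antisymm
  · exact key hn a b ha hb hapos hbpos φ hφ
  · intro y hy
    have h2 := key hn b a hb ha hbpos hapos φ.symm (symm_image hφ)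
    have h3 := h2 (Set.mem_image_of_mem _ hy)
    exact ⟨φ.symm y, h3, by simp⟩
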